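/- For all a, b > 0, the variance of log Y under the Beta(a,b) distribution equals ψ₁(a) − ψ₁(a+b): ∫₀¹ (log y − (ψ(a) − ψ(a+b)))² · f_{a,b}(y) dy = ψ₁(a) − ψ₁(a+b). -/

import Mathlib

open MeasureTheory Real Set

/-- The digamma function ψ(x) = Γ'(x)/Γ(x). -/
noncomputable def digamma (x : ℝ) : ℝ := deriv Real.Gamma x / Real.Gamma x

/-- The trigamma function ψ₁ = ψ'. -/
noncomputable def trigamma (x : ℝ) : ℝ := deriv digamma x

/-- The Beta(a,b) density f_{a,b}(y) = y^{a−1}(1−y)^{b−1}/B(a,b),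
with B(a,b) = Γ(a)Γ(b)/Γ(a+b). -/
noncomputable def betaDensity (a b y : ℝ) : ℝ :=
  y ^ (a - 1) * (1 - y) ^ (b - 1) / (Real.Gamma a * Real.Gamma b / Real.Gamma (a + b))

/-! ### Auxiliary lemmas -/

lemma analyticOnNhd_realGamma : AnalyticOnNhd ℝ Real.Gamma (Set.Ioi (0:ℝ)) := by
  have hC : AnalyticOnNhd ℂ Complex.Gamma {s : ℂ | 0 < s.re} := by
    intro s hs
    refine DifferentiableOn.analyticAt (s := {s : ℂ | 0 < s.re}) ?_ ?_
    · intro t ht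
      refine (Complex.differentiableAt_Gamma t ?_).differentiableWithinAt
      intro m hm
      have h2 : (0:ℝ) < t.re := ht
      rw [hm] at h2
      simp at h2
      exact absurd h2 (by simp)
    · exact (isOpen_lt continuous_const Complex.continuous_re).mem_nhds hs
  intro x hx
  have h1 : AnalyticAt ℝ (fun y : ℝ => (Complex.Gamma (y:ℝ)).re) x :=
    (Complex.reCLM.analyticAt _).comp
      (((hC _ (by simpa using hx)).restrictScalars).comp (Complex.ofRealCLM.analyticAt x))
  have : Real.Gamma = fun y : ℝ => (Complex.Gamma (y:ℝ)).re := by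
    funext y; rw [Complex.Gamma_ofReal, Complex.ofReal_re]
  rw [this]
  exact h1

lemma analyticAt_digamma {x : ℝ} (hx : 0 < x) : AnalyticAt ℝ digamma x := by
  have h1 : AnalyticAt ℝ (deriv Real.Gamma) x := analyticOnNhd_realGamma.deriv x hx
  exact h1.div (analyticOnNhd_realGamma x hx) (Real.Gamma_pos_of_pos hx).ne'

lemma hasDerivAt_digamma {x : ℝ} (hx : 0 < x) : HasDerivAt digamma (trigamma x) x :=
  (analyticAt_digamma hx).differentiableAt.hasDerivAt

lemma hasDerivAt_realGamma {x : ℝ} (hx : 0 < x) :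
    HasDerivAt Real.Gamma (deriv Real.Gamma x) x :=
  (analyticOnNhd_realGamma x hx).differentiableAt.hasDerivAt

lemma hasDerivAt_logGamma {x : ℝ} (hx : 0 < x) :
    HasDerivAt (fun y => Real.log (Real.Gamma y)) (digamma x) x := by
  have := (hasDerivAt_realGamma hx).log (Real.Gamma_pos_of_pos hx).ne'
  exact this

lemma integrableOn_logpow_kernel (k : ℕ) {c d : ℝ} (hc : 0 < c) (hd : 0 < d) :
    IntegrableOn (fun y => |Real.log y| ^ k * (y ^ (c-1) * (1-y) ^ (d-1)))
      (Set.Ioo (0:ℝ) 1) := by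
  have hmeas : ∀ s : Set ℝ, AEStronglyMeasurable
      (fun y => |Real.log y| ^ k * (y ^ (c-1) * (1-y) ^ (d-1))) (volume.restrict s) := by
    intro s
    exact ((Real.measurable_log.abs.pow_const k).mul
      (by fun_prop : Measurable (fun y : ℝ => y ^ (c-1) * (1-y) ^ (d-1)))).aestronglyMeasurable
  set ε : ℝ := c / (2 * (k+1)) with hε
  have hεpos : 0 < ε := by positivity
  -- Part A : on Ioo 0 (1/2)
  have hA : IntegrableOn (fun y => |Real.log y| ^ k * (y ^ (c-1) * (1-y) ^ (d-1)))
      (Set.Ioo (0:ℝ) (1/2)) := by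
    have hbd : ∀ y ∈ Set.Ioo (0:ℝ) (1/2),
        ‖|Real.log y| ^ k * (y ^ (c-1) * (1-y) ^ (d-1))‖
          ≤ (2 * (1/ε)^k) * y ^ (c/2 - 1) := by
      intro y hy
      obtain ⟨hy0, hy2⟩ := hy
      have hy1 : y < 1 := by linarith
      have h1y : (0:ℝ) < 1 - y := by linarith
      have hlog : |Real.log y| ≤ (1/ε) * y ^ (-ε) := by
        have hlogneg : Real.log y < 0 := Real.log_neg hy0 hy1
        rw [abs_of_neg hlogneg]
        have h2 : Real.log (y ^ (-ε)) ≤ y ^ (-ε) - 1 :=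
          Real.log_le_sub_one_of_pos (Real.rpow_pos_of_pos hy0 _)
        rw [Real.log_rpow hy0] at h2
        have h3 : -ε * Real.log y ≤ y ^ (-ε) := by
          have : (0:ℝ) ≤ y ^ (-ε) := (Real.rpow_pos_of_pos hy0 _).le
          nlinarith [Real.rpow_pos_of_pos hy0 (-ε)]
        calc -Real.log y = (1/ε) * (-ε * Real.log y) := by field_simp
          _ ≤ (1/ε) * y ^ (-ε) := by
              apply mul_le_mul_of_nonneg_left h3 (by positivity)
      have hlogk : |Real.log y| ^ k ≤ (1/ε)^k * y ^ (-(ε*k)) := by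
        calc |Real.log y| ^ k ≤ ((1/ε) * y ^ (-ε)) ^ k :=
              pow_le_pow_left₀ (abs_nonneg _) hlog k
          _ = (1/ε)^k * (y ^ (-ε))^k := mul_pow _ _ _
          _ = (1/ε)^k * y ^ (-(ε*k)) := by
              rw [← Real.rpow_natCast (y ^ (-ε)) k, ← Real.rpow_mul hy0.le]
              ring_nf
      have hyc : y ^ (-(ε*k)) * y ^ (c-1) ≤ y ^ (c/2 - 1) := by
        rw [← Real.rpow_add hy0]
        apply Real.rpow_le_rpow_of_exponent_ge hy0 hy1.le
        have hk : ε * k ≤ c/2 := by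
          rw [hε]
          rw [div_mul_eq_mul_div, div_le_div_iff₀ (by positivity) (by norm_num)]
          nlinarith [Nat.cast_nonneg (α := ℝ) k]
        linarith
      have h1yd : (1-y) ^ (d-1) ≤ 2 := by
        rw [Real.rpow_sub h1y, Real.rpow_one]
        have h1 : (1-y) ^ d ≤ 1 := Real.rpow_le_one h1y.le (by linarith) hd.le
        have h2 : (1:ℝ)/2 ≤ 1 - y := by linarith
        calc (1-y)^d / (1-y) ≤ 1 / (1-y) := by gcongr
          _ ≤ 2 := by rw [div_le_iff₀ h1y]; linarith
      have hpos : (0:ℝ) ≤ y ^ (c-1) := (Real.rpow_pos_of_pos hy0 _).le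
      have hpos2 : (0:ℝ) ≤ (1-y) ^ (d-1) := (Real.rpow_pos_of_pos h1y _).le
      rw [norm_of_nonneg (by positivity)]
      calc |Real.log y| ^ k * (y ^ (c-1) * (1-y) ^ (d-1))
          ≤ ((1/ε)^k * y ^ (-(ε*k))) * (y ^ (c-1) * 2) := by
            apply mul_le_mul hlogk
            · exact mul_le_mul_of_nonneg_left h1yd hpos
            · positivity
            · positivity
        _ = 2 * (1/ε)^k * (y ^ (-(ε*k)) * y ^ (c-1)) := by ring
        _ ≤ 2 * (1/ε)^k * y ^ (c/2-1) := by
            apply mul_le_mul_of_nonneg_left hyc (by positivity)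
    have hint : IntegrableOn (fun y => (2 * (1/ε)^k) * y ^ (c/2-1)) (Set.Ioo (0:ℝ) (1/2)) := by
      apply Integrable.const_mul
      exact (intervalIntegral.integrableOn_Ioo_rpow_iff
        (by norm_num : (0:ℝ) < 1/2)).2 (by linarith)
    exact Integrable.mono' hint (hmeas _)
      ((ae_restrict_iff' measurableSet_Ioo).2 (Filter.Eventually.of_forall hbd))
  -- Part B : on Ioo (1/2) 1
  have hB : IntegrableOn (fun y => |Real.log y| ^ k * (y ^ (c-1) * (1-y) ^ (d-1)))
      (Set.Ioo (1/2:ℝ) 1) := by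
    have hbd : ∀ y ∈ Set.Ioo (1/2:ℝ) 1,
        ‖|Real.log y| ^ k * (y ^ (c-1) * (1-y) ^ (d-1))‖ ≤ 2 * (1-y) ^ (d-1) := by
      intro y hy
      obtain ⟨hy2, hy1⟩ := hy
      have hy0 : (0:ℝ) < y := by linarith
      have h1y : (0:ℝ) < 1 - y := by linarith
      have hlog : |Real.log y| ≤ 1 := by
        rw [abs_of_neg (Real.log_neg hy0 hy1)]
        have h := Real.log_le_log (by norm_num : (0:ℝ) < 1/2) hy2.le
        rw [show (1:ℝ)/2 = 2⁻¹ by norm_num, Real.log_inv] at h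
        have h2 : Real.log 2 < 1 := by
          have := Real.log_two_lt_d9
          linarith
        linarith
      have hlogk : |Real.log y| ^ k ≤ 1 := pow_le_one₀ (abs_nonneg _) hlog
      have hyc : y ^ (c-1) ≤ 2 := by
        rw [Real.rpow_sub hy0, Real.rpow_one]
        have h1 : y ^ c ≤ 1 := Real.rpow_le_one hy0.le hy1.le hc.le
        calc y^c / y ≤ 1 / y := by gcongr
          _ ≤ 2 := by rw [div_le_iff₀ hy0]; linarith
      have hpos2 : (0:ℝ) ≤ (1-y) ^ (d-1) := (Real.rpow_pos_of_pos h1y _).le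
      rw [norm_of_nonneg (by positivity)]
      calc |Real.log y| ^ k * (y ^ (c-1) * (1-y) ^ (d-1))
          ≤ 1 * (2 * (1-y) ^ (d-1)) := by
            apply mul_le_mul hlogk (mul_le_mul_of_nonneg_right hyc hpos2) (by positivity) (by norm_num)
        _ = 2 * (1-y) ^ (d-1) := by ring
    have hint : IntegrableOn (fun y => 2 * (1-y) ^ (d-1)) (Set.Ioo (1/2:ℝ) 1) := by
      apply Integrable.const_mul
      have h1 : IntervalIntegrable (fun x : ℝ => x ^ (d-1)) volume 0 (1/2) :=
        intervalIntegral.intervalIntegrable_rpow' (by linarith)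
      have h2 := h1.comp_sub_left 1
      norm_num at h2
      exact (intervalIntegrable_iff_integrableOn_Ioo_of_le
        (by norm_num : (1/2:ℝ) ≤ 1)).1 h2.symm
    exact Integrable.mono' hint (hmeas _)
      ((ae_restrict_iff' measurableSet_Ioo).2 (Filter.Eventually.of_forall hbd))
  have : Set.Ioo (0:ℝ) 1 = Set.Ioo (0:ℝ) (1/2) ∪ Set.Ico (1/2) 1 :=
    (Set.Ioo_union_Ico_eq_Ioo (by norm_num) (by norm_num)).symm
  rw [this]
  exact hA.union ((integrableOn_Ico_iff_integrableOn_Ioo).2 hB)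

lemma aesm_logpow (k : ℕ) (c d : ℝ) :
    AEStronglyMeasurable (fun y : ℝ => (Real.log y) ^ k * (y ^ c * (1-y) ^ d))
      (volume.restrict (Set.Ioo (0:ℝ) 1)) :=
  ((Real.measurable_log.pow_const k).mul
      (by fun_prop : Measurable (fun y : ℝ => y ^ c * (1-y) ^ d))).aestronglyMeasurable

lemma integrableOn_logpow_kernel' (k : ℕ) {c d : ℝ} (hc : 0 < c) (hd : 0 < d) :
    IntegrableOn (fun y => (Real.log y) ^ k * (y ^ (c-1) * (1-y) ^ (d-1)))
      (Set.Ioo (0:ℝ) 1) := by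
  apply Integrable.mono' (integrableOn_logpow_kernel k hc hd) (aesm_logpow k (c-1) (d-1))
  refine (ae_restrict_iff' measurableSet_Ioo).2 (Filter.Eventually.of_forall ?_)
  intro y hy
  obtain ⟨hy0, hy1⟩ := hy
  have h1y : (0:ℝ) < 1 - y := by linarith
  rw [norm_mul, norm_pow, Real.norm_eq_abs,
    norm_of_nonneg (by positivity : (0:ℝ) ≤ y ^ (c-1) * (1-y) ^ (d-1))]

/-- The moments of `log` against the unnormalized Beta kernel. -/
noncomputable def mom (b : ℝ) (k : ℕ) (x : ℝ) : ℝ :=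
  ∫ y in Set.Ioo (0:ℝ) 1, (Real.log y) ^ k * (y ^ (x-1) * (1-y) ^ (b-1))

set_option maxHeartbeats 1000000 in
lemma hasDerivAt_momInt (k : ℕ) {a b : ℝ} (ha : 0 < a) (hb : 0 < b) :
    HasDerivAt (mom b k) (mom b (k+1) a) a := by
  have hmeas : ∀ᶠ x in nhds a, AEStronglyMeasurable
      (fun y : ℝ => (Real.log y) ^ k * (y ^ (x-1) * (1-y) ^ (b-1)))
      (volume.restrict (Set.Ioo (0:ℝ) 1)) :=
    Filter.Eventually.of_forall (fun x => aesm_logpow k (x-1) (b-1))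
  have hint : IntegrableOn (fun y => (Real.log y) ^ k * (y ^ (a-1) * (1-y) ^ (b-1)))
      (Set.Ioo (0:ℝ) 1) := integrableOn_logpow_kernel' k ha hb
  have hmeas' : AEStronglyMeasurable
      (fun y : ℝ => (Real.log y) ^ (k+1) * (y ^ (a-1) * (1-y) ^ (b-1)))
      (volume.restrict (Set.Ioo (0:ℝ) 1)) := aesm_logpow (k+1) (a-1) (b-1)
  have hbound : ∀ᵐ y ∂(volume.restrict (Set.Ioo (0:ℝ) 1)), ∀ x ∈ Metric.ball a (a/2),
      ‖(Real.log y) ^ (k+1) * (y ^ (x-1) * (1-y) ^ (b-1))‖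
        ≤ |Real.log y| ^ (k+1) * (y ^ (a/2-1) * (1-y) ^ (b-1)) := by
    refine (ae_restrict_iff' measurableSet_Ioo).2 (Filter.Eventually.of_forall ?_)
    intro y hy x hx
    obtain ⟨hy0, hy1⟩ := hy
    have h1y : (0:ℝ) < 1 - y := by linarith
    rw [Metric.mem_ball, Real.dist_eq, abs_lt] at hx
    rw [norm_mul, norm_pow, Real.norm_eq_abs,
      norm_of_nonneg (by positivity : (0:ℝ) ≤ y ^ (x-1) * (1-y) ^ (b-1))]
    apply mul_le_mul_of_nonneg_left _ (by positivity)
    apply mul_le_mul_of_nonneg_right _ (by positivity)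
    exact Real.rpow_le_rpow_of_exponent_ge hy0 hy1.le (by linarith)
  have hbi : Integrable (fun y => |Real.log y| ^ (k+1) * (y ^ (a/2-1) * (1-y) ^ (b-1)))
      (volume.restrict (Set.Ioo (0:ℝ) 1)) :=
    integrableOn_logpow_kernel (k+1) (by positivity : (0:ℝ) < a/2) hb
  have hdiff : ∀ᵐ y ∂(volume.restrict (Set.Ioo (0:ℝ) 1)), ∀ x ∈ Metric.ball a (a/2),
      HasDerivAt (fun x => (Real.log y) ^ k * (y ^ (x-1) * (1-y) ^ (b-1)))
        ((Real.log y) ^ (k+1) * (y ^ (x-1) * (1-y) ^ (b-1))) x := by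
    refine (ae_restrict_iff' measurableSet_Ioo).2 (Filter.Eventually.of_forall ?_)
    intro y hy x _
    obtain ⟨hy0, hy1⟩ := hy
    have hbase : HasDerivAt (fun x : ℝ => y ^ (x-1)) (y ^ (x-1) * Real.log y) x := by
      have h1 := ((Real.hasStrictDerivAt_const_rpow hy0 (x-1)).hasDerivAt).comp x
        ((hasDerivAt_id x).sub_const 1)
      simpa [Function.comp_def] using h1
    have h2 := (hbase.mul_const ((1-y) ^ (b-1))).const_mul ((Real.log y) ^ k)
    refine h2.congr_deriv ?_
    ring
  exact (hasDerivAt_integral_of_dominated_loc_of_deriv_le (Metric.ball_mem_nhds a (by positivity : (0:ℝ) < a/2))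
    hmeas hint hmeas' hbound hbi hdiff).2

lemma betaInt_eq {a b : ℝ} (ha : 0 < a) (hb : 0 < b) :
    ∫ y in Set.Ioo (0:ℝ) 1, y ^ (a-1) * (1-y) ^ (b-1)
      = Real.Gamma a * Real.Gamma b / Real.Gamma (a+b) := by
  have hc := Complex.Gamma_mul_Gamma_eq_betaIntegral
    (s := (a:ℂ)) (t := (b:ℂ)) (by simpa using ha) (by simpa using hb)
  have hbeta : Complex.betaIntegral (a:ℂ) (b:ℂ)
      = ((∫ y in (0:ℝ)..1, y ^ (a-1) * (1-y) ^ (b-1) : ℝ) : ℂ) := by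
    rw [Complex.betaIntegral, ← intervalIntegral.integral_ofReal]
    apply intervalIntegral.integral_congr
    intro x hx
    rw [Set.uIcc_of_le (by norm_num : (0:ℝ) ≤ 1)] at hx
    obtain ⟨hx0, hx1⟩ := hx
    beta_reduce
    rw [show ((a:ℂ) - 1) = ((a-1:ℝ):ℂ) by push_cast; ring,
      show ((b:ℂ) - 1) = ((b-1:ℝ):ℂ) by push_cast; ring,
      show ((1:ℂ) - (x:ℂ)) = ((1-x:ℝ):ℂ) by push_cast; ring,
      ← Complex.ofReal_cpow hx0, ← Complex.ofReal_cpow (by linarith : (0:ℝ) ≤ 1 - x)]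
    push_cast
    ring
  rw [hbeta, ← Complex.ofReal_add, Complex.Gamma_ofReal, Complex.Gamma_ofReal,
    Complex.Gamma_ofReal, ← Complex.ofReal_mul, ← Complex.ofReal_mul] at hc
  have hre : Real.Gamma a * Real.Gamma b
      = Real.Gamma (a+b) * ∫ y in (0:ℝ)..1, y ^ (a-1) * (1-y) ^ (b-1) := by
    exact_mod_cast hc
  have hI : ∫ y in Set.Ioo (0:ℝ) 1, y ^ (a-1) * (1-y) ^ (b-1)
      = ∫ y in (0:ℝ)..1, y ^ (a-1) * (1-y) ^ (b-1) := by
    rw [intervalIntegral.integral_of_le (by norm_num : (0:ℝ) ≤ 1),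
      ← MeasureTheory.integral_Ioc_eq_integral_Ioo]
  rw [hI, hre]
  field_simp [(Real.Gamma_pos_of_pos (by linarith : (0:ℝ) < a + b)).ne']

/-- Var[log Y] under Beta(a,b) equals ψ₁(a) − ψ₁(a+b). -/
theorem beta_var_log (a b : ℝ) (ha : 0 < a) (hb : 0 < b) :
    ∫ y in Set.Ioo (0:ℝ) 1,
      (Real.log y - (digamma a - digamma (a + b))) ^ 2 * betaDensity a b y
      = trigamma a - trigamma (a + b) := by
  set g : ℝ → ℝ := mom b 0 with hgdef
  set h : ℝ → ℝ := fun x => digamma x - digamma (x + b) with hhdef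
  -- g equals the Beta function values
  have hg_eq : ∀ x, 0 < x → g x = Real.Gamma x * Real.Gamma b / Real.Gamma (x+b) := by
    intro x hx
    rw [hgdef]
    unfold mom
    simp only [pow_zero, one_mul]
    exact betaInt_eq hx hb
  have hg_pos : ∀ x, 0 < x → 0 < g x := by
    intro x hx
    rw [hg_eq x hx]
    have h1 := Real.Gamma_pos_of_pos hx
    have h2 := Real.Gamma_pos_of_pos hb
    have h3 := Real.Gamma_pos_of_pos (by linarith : 0 < x + b)
    positivity
  -- first logarithmic derivative identity : mom b 1 = g * h on Ioi 0
  have hm1_eq : ∀ x, 0 < x → mom b 1 x = g x * h x := by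
    intro x hx
    have hA : HasDerivAt (fun x => Real.log (g x)) (mom b 1 x / g x) x :=
      (hasDerivAt_momInt 0 hx hb).log (hg_pos x hx).ne'
    have hB : HasDerivAt (fun x => Real.log (g x)) (h x) x := by
      have hRHS : HasDerivAt
          (fun x => Real.log (Real.Gamma x) + Real.log (Real.Gamma b)
            - Real.log (Real.Gamma (x+b))) (h x) x := by
        have h1 := (hasDerivAt_logGamma hx).add_const (Real.log (Real.Gamma b))
        have h2 : HasDerivAt (fun x => Real.log (Real.Gamma (x+b))) (digamma (x+b)) x := by
          have := (hasDerivAt_logGamma (by linarith : 0 < x + b)).comp x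
            ((hasDerivAt_id x).add_const b)
          simpa [Function.comp_def] using this
        exact h1.sub h2
      apply hRHS.congr_of_eventuallyEq
      have hmem : Set.Ioi (0:ℝ) ∈ nhds x := isOpen_Ioi.mem_nhds hx
      filter_upwards [hmem] with t ht
      have ht' : 0 < t := ht
      rw [hg_eq t ht',
        Real.log_div (mul_pos (Real.Gamma_pos_of_pos ht') (Real.Gamma_pos_of_pos hb)).ne'
          (Real.Gamma_pos_of_pos (by linarith : 0 < t + b)).ne',
        Real.log_mul (Real.Gamma_pos_of_pos ht').ne' (Real.Gamma_pos_of_pos hb).ne']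
    have huniq : mom b 1 x / g x = h x := hA.unique hB
    rw [div_eq_iff (hg_pos x hx).ne'] at huniq
    linarith [huniq]
  -- differentiate the identity
  have ht_eq : mom b 2 a = mom b 1 a * h a + g a * (trigamma a - trigamma (a+b)) := by
    have hA : HasDerivAt (mom b 1) (mom b 2 a) a := hasDerivAt_momInt 1 ha hb
    have hder_h : HasDerivAt h (trigamma a - trigamma (a+b)) a := by
      have h2 : HasDerivAt (fun x => digamma (x+b)) (trigamma (a+b)) a := by
        have := (hasDerivAt_digamma (by linarith : 0 < a + b)).comp a
          ((hasDerivAt_id a).add_const b)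
        simpa [Function.comp_def] using this
      exact (hasDerivAt_digamma ha).sub h2
    have hB : HasDerivAt (mom b 1)
        (mom b 1 a * h a + g a * (trigamma a - trigamma (a+b))) a := by
      have hgh : HasDerivAt (fun x => g x * h x)
          (mom b 1 a * h a + g a * (trigamma a - trigamma (a+b))) a :=
        (hasDerivAt_momInt 0 ha hb).mul hder_h
      apply hgh.congr_of_eventuallyEq
      filter_upwards [isOpen_Ioi.mem_nhds (Set.mem_Ioi.mpr ha)] with t ht
      exact hm1_eq t (Set.mem_Ioi.mp ht)
    exact hA.unique hB
  -- final computation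
  set c : ℝ := digamma a - digamma (a+b) with hcdef
  have hca : c = h a := rfl
  have hB : Real.Gamma a * Real.Gamma b / Real.Gamma (a+b) = g a := (hg_eq a ha).symm
  have hint : ∀ y : ℝ, (Real.log y - c) ^ 2 * betaDensity a b y
      = (g a)⁻¹ * (((Real.log y)^2 * (y^(a-1) * (1-y)^(b-1))
          - (2*c) * ((Real.log y)^1 * (y^(a-1) * (1-y)^(b-1))))
        + c^2 * ((Real.log y)^0 * (y^(a-1) * (1-y)^(b-1)))) := by
    intro y
    unfold betaDensity
    rw [hB]
    field_simp
    ring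
  calc ∫ y in Set.Ioo (0:ℝ) 1, (Real.log y - c) ^ 2 * betaDensity a b y
      = ∫ y in Set.Ioo (0:ℝ) 1, (g a)⁻¹ * (((Real.log y)^2 * (y^(a-1) * (1-y)^(b-1))
          - (2*c) * ((Real.log y)^1 * (y^(a-1) * (1-y)^(b-1))))
        + c^2 * ((Real.log y)^0 * (y^(a-1) * (1-y)^(b-1)))) := by
        exact integral_congr_ae (Filter.Eventually.of_forall (fun y => hint y))
    _ = (g a)⁻¹ * (((mom b 2 a) - (2*c) * (mom b 1 a)) + c^2 * (g a)) := by
        rw [integral_const_mul]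
        congr 1
        rw [integral_add, integral_sub, integral_const_mul, integral_const_mul]
        · rfl
        · exact integrableOn_logpow_kernel' 2 ha hb
        · exact (integrableOn_logpow_kernel' 1 ha hb).const_mul _
        · exact (integrableOn_logpow_kernel' 2 ha hb).sub
            ((integrableOn_logpow_kernel' 1 ha hb).const_mul _)
        · exact (integrableOn_logpow_kernel' 0 ha hb).const_mul _
    _ = trigamma a - trigamma (a+b) := by
        rw [ht_eq, hm1_eq a ha, ← hca]
        field_simp [(hg_pos a ha).ne']
        ring
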